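/- (Key identity of magnetic perturbation theory, at the level of integral kernels.) Let L > 0, ξ, z ∈ ℂ, δω ∈ ℝ, and let G, g : Λ × Λ → ℂ be continuous and bounded. Assume the resolvent-type equation ξ g(x,x') = z ∫_Λ G(x,y) g(y,x') dy + z G(x,x') holds for all x, x' ∈ Λ. Define the regularized kernels G̃(x,x') := e^{i δω φ(x,x')} G(x,x') and g̃(x,x') := e^{i δω φ(x,x')} g(x,x'), and set r̂(x,x') := −z e^{i δω φ(x,x')} ∫_Λ (e^{i δω fl(x,y,x')} − 1) G(x,y) g(y,x') dy. Then for all x, x' ∈ Λ: ξ g̃(x,x') = z ∫_Λ G̃(x,y) g̃(y,x') dy + z G̃(x,x') + r̂(x,x'). -/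

import Mathlib

open MeasureTheory Real

noncomputable section

/-- The open cube `Λ = (−L/2, L/2)³ ⊂ ℝ³`. -/
def cube (L : ℝ) : Set (EuclideanSpace ℝ (Fin 3)) :=
  {x | ∀ i, x i ∈ Set.Ioo (-(L / 2)) (L / 2)}

/-- The magnetic phase `φ(x,x') = (x₂x₁' − x₁x₂')/2`. -/
def phi (x x' : EuclideanSpace ℝ (Fin 3)) : ℝ := (x 1 * x' 0 - x 0 * x' 1) / 2

/-- The magnetic flux through the triangle with vertices `x`, `y`, `x'`. -/
def fl (x y x' : EuclideanSpace ℝ (Fin 3)) : ℝ := phi x y + phi y x' + phi x' x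

lemma isOpen_cube (L : ℝ) : IsOpen (cube L) := by
  have : cube L = ⋂ i : Fin 3, (fun x : EuclideanSpace ℝ (Fin 3) => x i) ⁻¹' Set.Ioo (-(L/2)) (L/2) := by
    ext x; simp [cube]
  rw [this]
  exact isOpen_iInter_of_finite fun i => isOpen_Ioo.preimage (by fun_prop)

lemma norm_le_of_mem_cube {L : ℝ} (hL : 0 < L) {x : EuclideanSpace ℝ (Fin 3)}
    (hx : x ∈ cube L) : ‖x‖ ≤ L := by
  rw [EuclideanSpace.norm_eq]
  have h : ∀ i : Fin 3, ‖x i‖ ^ 2 ≤ (L/2)^2 := by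
    intro i
    have := hx i
    have h1 : |x i| ≤ L/2 := le_of_lt (abs_lt.2 ⟨by linarith [this.1], this.2⟩)
    calc ‖x i‖^2 = |x i|^2 := by rw [Real.norm_eq_abs]
      _ ≤ (L/2)^2 := by nlinarith [abs_nonneg (x i)]
  calc Real.sqrt (∑ i : Fin 3, ‖x i‖^2) ≤ Real.sqrt (∑ _i : Fin 3, (L/2)^2) :=
        Real.sqrt_le_sqrt (Finset.sum_le_sum fun i _ => h i)
    _ ≤ L := by
        rw [Finset.sum_const]
        simp only [Finset.card_univ, Fintype.card_fin, nsmul_eq_mul]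
        have h3 : ((3:ℕ):ℝ) * (L/2)^2 ≤ L^2 := by push_cast; nlinarith
        calc Real.sqrt (((3:ℕ):ℝ) * (L/2)^2) ≤ Real.sqrt (L^2) := Real.sqrt_le_sqrt h3
          _ = L := Real.sqrt_sq hL.le

lemma volume_cube_lt_top {L : ℝ} (hL : 0 < L) : volume (cube L) < ⊤ :=
  Bornology.IsBounded.measure_lt_top
    (isBounded_iff_forall_norm_le.2 ⟨L, fun x hx => norm_le_of_mem_cube hL hx⟩)

/-- Key identity of magnetic perturbation theory at the level of integral kernels:
if `ξ g(x,x') = z ∫_Λ G(x,y) g(y,x') dy + z G(x,x')` on `Λ × Λ`, then the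
regularized kernels `G̃(x,x') = e^{iδωφ(x,x')}G(x,x')`,
`g̃(x,x') = e^{iδωφ(x,x')}g(x,x')` satisfy
`ξ g̃(x,x') = z ∫_Λ G̃(x,y) g̃(y,x') dy + z G̃(x,x') + r̂(x,x')` with
`r̂(x,x') = −z e^{iδωφ(x,x')} ∫_Λ (e^{iδω fl(x,y,x')} − 1) G(x,y) g(y,x') dy`. -/
theorem regularized_kernel_identity (L : ℝ) (hL : 0 < L) (ξ z : ℂ) (δω : ℝ)
    (G g : EuclideanSpace ℝ (Fin 3) → EuclideanSpace ℝ (Fin 3) → ℂ)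
    (hGc : ContinuousOn (Function.uncurry G) (cube L ×ˢ cube L))
    (hgc : ContinuousOn (Function.uncurry g) (cube L ×ˢ cube L))
    (hGb : ∃ C : ℝ, ∀ x ∈ cube L, ∀ x' ∈ cube L, ‖G x x'‖ ≤ C)
    (hgb : ∃ C : ℝ, ∀ x ∈ cube L, ∀ x' ∈ cube L, ‖g x x'‖ ≤ C)
    (hres : ∀ x ∈ cube L, ∀ x' ∈ cube L,
      ξ * g x x' = z * (∫ y in cube L, G x y * g y x') + z * G x x') :
    ∀ x ∈ cube L, ∀ x' ∈ cube L,
      ξ * (Complex.exp (Complex.I * (δω : ℂ) * (phi x x' : ℝ)) * g x x') =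
        z * (∫ y in cube L,
              (Complex.exp (Complex.I * (δω : ℂ) * (phi x y : ℝ)) * G x y) *
                (Complex.exp (Complex.I * (δω : ℂ) * (phi y x' : ℝ)) * g y x')) +
        z * (Complex.exp (Complex.I * (δω : ℂ) * (phi x x' : ℝ)) * G x x') +
        -z * Complex.exp (Complex.I * (δω : ℂ) * (phi x x' : ℝ)) *
          (∫ y in cube L,
            (Complex.exp (Complex.I * (δω : ℂ) * (fl x y x' : ℝ)) - 1) *
              G x y * g y x') := by
  intro x hx x' hx'
  obtain ⟨CG, hCG⟩ := hGb
  obtain ⟨Cg, hCg⟩ := hgb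
  have hmeas : MeasurableSet (cube L) := (isOpen_cube L).measurableSet
  -- continuity of y ↦ G x y and y ↦ g y x' on cube
  have hGone : ContinuousOn (fun y => G x y) (cube L) := by
    have : ContinuousOn (fun y : EuclideanSpace ℝ (Fin 3) => Function.uncurry G (x, y)) (cube L) :=
      hGc.comp (Continuous.continuousOn (by fun_prop)) (fun y hy => ⟨hx, hy⟩)
    exact this
  have hgone : ContinuousOn (fun y => g y x') (cube L) := by
    have : ContinuousOn (fun y : EuclideanSpace ℝ (Fin 3) => Function.uncurry g (y, x')) (cube L) :=
      hgc.comp (Continuous.continuousOn (by fun_prop)) (fun y hy => ⟨hy, hx'⟩)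
    exact this
  have hGg : ContinuousOn (fun y => G x y * g y x') (cube L) := hGone.mul hgone
  -- integrability of G x y * g y x'
  have hint2 : IntegrableOn (fun y => G x y * g y x') (cube L) := by
    apply Integrable.mono' (g := fun _ => CG * Cg)
    · exact integrableOn_const (volume_cube_lt_top hL).ne
    · exact hGg.aestronglyMeasurable hmeas
    · filter_upwards [ae_restrict_mem hmeas] with y hy
      calc ‖G x y * g y x'‖ = ‖G x y‖ * ‖g y x'‖ := norm_mul _ _
        _ ≤ CG * Cg := by
            exact mul_le_mul (hCG x hx y hy) (hCg y hy x' hx') (norm_nonneg _)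
              ((norm_nonneg _).trans (hCG x hx y hy))
  -- continuity of the flux phase
  have hflc : ContinuousOn (fun y => (Complex.exp (Complex.I * (δω : ℂ) * (fl x y x' : ℝ)) - 1)) (cube L) := by
    have : Continuous (fun y : EuclideanSpace ℝ (Fin 3) =>
        Complex.exp (Complex.I * (δω : ℂ) * (fl x y x' : ℝ)) - 1) := by
      apply Continuous.sub _ continuous_const
      apply Complex.continuous_exp.comp
      apply Continuous.mul continuous_const
      apply Complex.continuous_ofReal.comp
      unfold fl phi
      fun_prop
    exact this.continuousOn
  -- integrability of (e^{ifl}-1) G g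
  have hint1 : IntegrableOn (fun y =>
      (Complex.exp (Complex.I * (δω : ℂ) * (fl x y x' : ℝ)) - 1) * G x y * g y x') (cube L) := by
    apply Integrable.mono' (g := fun _ => 2 * (CG * Cg))
    · exact integrableOn_const (volume_cube_lt_top hL).ne
    · exact ((hflc.mul hGone).mul hgone).aestronglyMeasurable hmeas
    · filter_upwards [ae_restrict_mem hmeas] with y hy
      have hexp : ‖Complex.exp (Complex.I * (δω : ℂ) * (fl x y x' : ℝ)) - 1‖ ≤ 2 := by
        calc ‖Complex.exp (Complex.I * (δω : ℂ) * (fl x y x' : ℝ)) - 1‖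
            ≤ ‖Complex.exp (Complex.I * (δω : ℂ) * (fl x y x' : ℝ))‖ + ‖(1:ℂ)‖ := norm_sub_le _ _
          _ ≤ 2 := by
              have : ‖Complex.exp (Complex.I * (δω : ℂ) * (fl x y x' : ℝ))‖ = 1 := by
                rw [show Complex.I * (δω : ℂ) * ((fl x y x' : ℝ) : ℂ)
                    = ((δω * fl x y x' : ℝ) : ℂ) * Complex.I by push_cast; ring]
                exact Complex.norm_exp_ofReal_mul_I _
              rw [this]; norm_num
      have h1 := hCG x hx y hy
      have h2 := hCg y hy x' hx'
      calc ‖(Complex.exp (Complex.I * (δω : ℂ) * (fl x y x' : ℝ)) - 1) * G x y * g y x'‖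
          = ‖Complex.exp (Complex.I * (δω : ℂ) * (fl x y x' : ℝ)) - 1‖ * ‖G x y‖ * ‖g y x'‖ := by
            rw [norm_mul, norm_mul]
        _ = ‖Complex.exp (Complex.I * (δω : ℂ) * (fl x y x' : ℝ)) - 1‖ * (‖G x y‖ * ‖g y x'‖) := by
            ring
        _ ≤ 2 * (CG * Cg) :=
            mul_le_mul hexp (mul_le_mul h1 h2 (norm_nonneg _) ((norm_nonneg _).trans h1))
              (by positivity) (by norm_num)
  -- rewrite the first integral
  set E := Complex.exp (Complex.I * (δω : ℂ) * (phi x x' : ℝ)) with hE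
  have key : (∫ y in cube L,
      (Complex.exp (Complex.I * (δω : ℂ) * (phi x y : ℝ)) * G x y) *
        (Complex.exp (Complex.I * (δω : ℂ) * (phi y x' : ℝ)) * g y x')) =
      E * ((∫ y in cube L,
        (Complex.exp (Complex.I * (δω : ℂ) * (fl x y x' : ℝ)) - 1) * G x y * g y x')
        + (∫ y in cube L, G x y * g y x')) := by
    rw [← integral_add hint1 hint2, ← integral_const_mul]
    apply setIntegral_congr_fun hmeas
    intro y _
    have hphi : phi x y + phi y x' = phi x x' + fl x y x' := by
      unfold fl phi; ring
    have hmul : Complex.exp (Complex.I * (δω : ℂ) * (phi x y : ℝ)) *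
        Complex.exp (Complex.I * (δω : ℂ) * (phi y x' : ℝ)) =
        E * Complex.exp (Complex.I * (δω : ℂ) * (fl x y x' : ℝ)) := by
      rw [hE, ← Complex.exp_add, ← Complex.exp_add]
      congr 1
      have h2 : ((phi x y + phi y x' : ℝ) : ℂ) = ((phi x x' + fl x y x' : ℝ) : ℂ) := by
        rw [hphi]
      push_cast at h2
      linear_combination Complex.I * (δω : ℂ) * h2
    calc (Complex.exp (Complex.I * (δω : ℂ) * (phi x y : ℝ)) * G x y) *
          (Complex.exp (Complex.I * (δω : ℂ) * (phi y x' : ℝ)) * g y x')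
        = (Complex.exp (Complex.I * (δω : ℂ) * (phi x y : ℝ)) *
            Complex.exp (Complex.I * (δω : ℂ) * (phi y x' : ℝ))) * (G x y * g y x') := by ring
      _ = E * ((Complex.exp (Complex.I * (δω : ℂ) * (fl x y x' : ℝ)) - 1) * G x y * g y x'
            + G x y * g y x') := by rw [hmul]; ring
  rw [key]
  linear_combination E * (hres x hx x' hx')
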